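/- arXiv:1704.01223 — 2 statements merged into one kernel-verified Lean document; each statement's English description precedes it below -/
import Mathlib

section
/- Minimum sampling set size bound: assume W = V_K^H H^H H V_K is positive definite, let ℓ_max = max_{1≤i≤n} ℓ_i with ℓ_i = λ_{w,i}^{-1} v_i^H W^{-1} v_i, assume ℓ_max > 0, and let η > 0. Then every subset S ⊆ {1,…,n} with MSE(S) ≤ η satisfies |S| ≥ ( k² − η·trace(Λ^{-1} W^{-1}) ) / ( η·ℓ_max ). -/
open Matrix Finset ComplexOrder

/-- The matrix `M(S) = Λ⁻¹ + ∑_{i ∈ S} λ_{w,i}⁻¹ v_i v_iᴴ`. -/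
noncomputable def Mmat {n k : ℕ} (lam : Fin k → ℝ) (lw : Fin n → ℝ)
    (v : Fin n → Fin k → ℂ) (S : Finset (Fin n)) : Matrix (Fin k) (Fin k) ℂ :=
  (Matrix.diagonal fun j => (lam j : ℂ))⁻¹ +
    ∑ i ∈ S, ((lw i : ℂ))⁻¹ • Matrix.vecMulVec (v i) (star (v i))

/-- The matrix `V_K` whose `i`-th row is `v_iᴴ`. -/
noncomputable def VKmat {n k : ℕ} (v : Fin n → Fin k → ℂ) : Matrix (Fin n) (Fin k) ℂ :=
  Matrix.of fun i j => star (v i j)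

/-- The optimal interpolation error covariance `K*(S) = H V_K M(S)⁻¹ V_Kᴴ Hᴴ`. -/
noncomputable def Kstar {n k m : ℕ} (lam : Fin k → ℝ) (lw : Fin n → ℝ)
    (v : Fin n → Fin k → ℂ) (H : Matrix (Fin m) (Fin n) ℂ) (S : Finset (Fin n)) :
    Matrix (Fin m) (Fin m) ℂ :=
  H * VKmat v * (Mmat lam lw v S)⁻¹ * (VKmat v)ᴴ * Hᴴ

/-- The interpolation mean-square error `MSE(S) = trace K*(S)`, a (nonnegative) real. -/
noncomputable def MSE {n k m : ℕ} (lam : Fin k → ℝ) (lw : Fin n → ℝ)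
    (v : Fin n → Fin k → ℂ) (H : Matrix (Fin m) (Fin n) ℂ) (S : Finset (Fin n)) : ℝ :=
  ((Kstar lam lw v H S).trace).re

/-- Auxiliary: flatten a matrix into a Euclidean space vector. -/
noncomputable def toE {k : ℕ} (C : Matrix (Fin k) (Fin k) ℂ) :
    EuclideanSpace ℂ (Fin k × Fin k) := WithLp.toLp 2 (fun p : Fin k × Fin k => C p.1 p.2)

lemma inner_toE {k : ℕ} (C D : Matrix (Fin k) (Fin k) ℂ) :
    (inner ℂ (toE C) (toE D) : ℂ) = (Cᴴ * D).trace := by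
  simp only [toE, PiLp.inner_apply, PiLp.toLp_apply, RCLike.inner_apply, Matrix.trace, Matrix.diag_apply,
    Matrix.mul_apply, conjTranspose_apply, Fintype.sum_prod_type]
  rw [Finset.sum_comm]
  simp [RCLike.star_def]
  exact Finset.sum_congr rfl fun _ _ => Finset.sum_congr rfl fun _ _ => mul_comm _ _

lemma trace_conj_self_re_nonneg {k : ℕ} (A : Matrix (Fin k) (Fin k) ℂ) :
    0 ≤ ((Aᴴ * A).trace).re := by
  have hx : ‖toE A‖ ^ 2 = ((Aᴴ * A).trace).re := by
    rw [@norm_sq_eq_re_inner ℂ, inner_toE A A]; rfl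
  rw [← hx]; positivity

lemma trace_cs {k : ℕ} (A B : Matrix (Fin k) (Fin k) ℂ) :
    ‖(Aᴴ * B).trace‖ ^ 2 ≤ ((Aᴴ * A).trace).re * ((Bᴴ * B).trace).re := by
  have h := norm_inner_le_norm (𝕜 := ℂ) (toE A) (toE B)
  have hx : ‖toE A‖ ^ 2 = ((Aᴴ * A).trace).re := by
    rw [@norm_sq_eq_re_inner ℂ, inner_toE A A]; rfl
  have hy : ‖toE B‖ ^ 2 = ((Bᴴ * B).trace).re := by
    rw [@norm_sq_eq_re_inner ℂ, inner_toE B B]; rfl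
  calc ‖(Aᴴ * B).trace‖ ^ 2 = ‖(inner ℂ (toE A) (toE B) : ℂ)‖ ^ 2 := by rw [inner_toE A B]
    _ ≤ (‖toE A‖ * ‖toE B‖) ^ 2 := by
        apply pow_le_pow_left₀ (norm_nonneg _) h
    _ = ((Aᴴ * A).trace).re * ((Bᴴ * B).trace).re := by rw [mul_pow, hx, hy]

lemma outer_psd {k : ℕ} (c : ℝ) (hc : 0 ≤ c) (v : Fin k → ℂ) :
    ((c : ℂ) • Matrix.vecMulVec v (star v)).PosSemidef := by
  rw [Matrix.posSemidef_iff_dotProduct_mulVec]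
  constructor
  · unfold Matrix.IsHermitian
    ext i j
    simp [Matrix.vecMulVec_apply, Complex.conj_ofReal, mul_comm]
  · intro x
    have hmv : (Matrix.vecMulVec v (star v)) *ᵥ x = (star v ⬝ᵥ x) • v := by
      ext i
      simp [Matrix.mulVec, Matrix.vecMulVec_apply, dotProduct, Finset.mul_sum, mul_comm,
        mul_assoc, mul_left_comm]
    rw [smul_mulVec, dotProduct_smul, hmv, dotProduct_smul]
    have hsx : star x ⬝ᵥ v = star (star v ⬝ᵥ x) := Matrix.star_dotProduct _ _
    rw [hsx, smul_eq_mul, smul_eq_mul]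
    have h1 : (0:ℂ) ≤ (c:ℂ) := by rw [Complex.zero_le_real]; exact hc
    exact mul_nonneg h1 (mul_star_self_nonneg _)

set_option maxHeartbeats 1000000 in
lemma Mmat_posdef {n k : ℕ} (lam : Fin k → ℝ) (hlam : ∀ j, 0 < lam j)
    (lw : Fin n → ℝ) (hlw : ∀ i, 0 < lw i)
    (v : Fin n → Fin k → ℂ) (S : Finset (Fin n)) :
    (Mmat lam lw v S).PosDef := by
  unfold Mmat
  apply Matrix.PosDef.add_posSemidef
  · rw [Matrix.posDef_inv_iff, Matrix.posDef_diagonal_iff]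
    intro i
    exact Complex.zero_lt_real.mpr (hlam i)
  · apply Finset.sum_induction _ _ (fun a b ha hb => ha.add hb) Matrix.PosSemidef.zero
    intro i _
    have h : ((lw i : ℂ))⁻¹ = (((lw i)⁻¹ : ℝ) : ℂ) := by push_cast; ring
    rw [h]
    exact outer_psd _ (inv_nonneg.mpr (hlw i).le) _

lemma trace_outer_mul {k : ℕ} (a : Fin k → ℂ) (X : Matrix (Fin k) (Fin k) ℂ) :
    (Matrix.vecMulVec a (star a) * X).trace = star a ⬝ᵥ X *ᵥ a := by
  simp only [Matrix.trace, Matrix.diag_apply, Matrix.mul_apply, Matrix.vecMulVec_apply,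
    dotProduct, Matrix.mulVec, Finset.mul_sum, Pi.star_apply]
  rw [Finset.sum_comm]
  congr 1; ext j
  congr 1; ext i
  ring

/-- Minimum sampling set size bound: if `W = V_Kᴴ Hᴴ H V_K` is positive
definite, `ℓ_max = max_i ℓ_i > 0` with `ℓ_i = λ_{w,i}⁻¹ v_iᴴ W⁻¹ v_i`, and `η > 0`, then
every `S` with `MSE(S) ≤ η` satisfies `|S| ≥ (k² - η · trace(Λ⁻¹ W⁻¹)) / (η · ℓ_max)`. -/
theorem minimum_sampling_set_size_bound
    (n k m : ℕ)
    (v : Fin n → Fin k → ℂ)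
    (H : Matrix (Fin m) (Fin n) ℂ)
    (lam : Fin k → ℝ) (hlam : ∀ j, 0 < lam j)
    (lw : Fin n → ℝ) (hlw : ∀ i, 0 < lw i)
    (W : Matrix (Fin k) (Fin k) ℂ)
    (hWdef : W = (VKmat v)ᴴ * Hᴴ * H * VKmat v)
    (hW : W.PosDef)
    (ell : Fin n → ℝ)
    (hell : ∀ i, ell i = (lw i)⁻¹ * (star (v i) ⬝ᵥ (W⁻¹ *ᵥ v i)).re)
    (lmax : ℝ) (hlmax : IsGreatest (Set.range ell) lmax) (hlmaxpos : 0 < lmax)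
    (η : ℝ) (hη : 0 < η)
    (S : Finset (Fin n))
    (hMSE : MSE lam lw v H S ≤ η) :
    ((k : ℝ) ^ 2 -
        η * (((Matrix.diagonal fun j => (lam j : ℂ))⁻¹ * W⁻¹).trace).re) / (η * lmax)
      ≤ (S.card : ℝ) := by
  set M : Matrix (Fin k) (Fin k) ℂ := Mmat lam lw v S with hMdef
  have hM : M.PosDef := Mmat_posdef lam hlam lw hlw v S
  open MatrixOrder in set sM := CFC.sqrt M with hsMdef
  open MatrixOrder in set sW := CFC.sqrt W with hsWdef
  open MatrixOrder in have hsM : sM * sM = M := CFC.sqrt_mul_sqrt_self M hM.posSemidef.nonneg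
  open MatrixOrder in have hsW : sW * sW = W := CFC.sqrt_mul_sqrt_self W hW.posSemidef.nonneg
  open MatrixOrder in have hsMh : sMᴴ = sM := (CFC.sqrt_nonneg M).posSemidef.1
  open MatrixOrder in have hsWh : sWᴴ = sW := (CFC.sqrt_nonneg W).posSemidef.1
  have hdM : sM.det ≠ 0 := by
    have h2 : sM.det * sM.det = M.det := by rw [← Matrix.det_mul, hsM]
    intro h; rw [h, mul_zero] at h2; exact hM.det_pos.ne' h2.symm
  have hdW : sW.det ≠ 0 := by
    have h2 : sW.det * sW.det = W.det := by rw [← Matrix.det_mul, hsW]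
    intro h; rw [h, mul_zero] at h2; exact hW.det_pos.ne' h2.symm
  set tM := sM⁻¹ with htMdef
  set tW := sW⁻¹ with htWdef
  have htM2 : tM * tM = M⁻¹ := by rw [htMdef, ← Matrix.mul_inv_rev, hsM]
  have htW2 : tW * tW = W⁻¹ := by rw [htWdef, ← Matrix.mul_inv_rev, hsW]
  have htMh : tMᴴ = tM := by rw [htMdef, Matrix.conjTranspose_nonsing_inv, hsMh]
  -- the two Cauchy–Schwarz factors
  have tr1 : ((sW * tM)ᴴ * (sW * tM)).trace = (W * M⁻¹).trace := by
    rw [Matrix.conjTranspose_mul, htMh, hsWh]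
    have e : tM * sW * (sW * tM) = tM * (W * tM) := by
      rw [Matrix.mul_assoc tM sW (sW * tM), ← Matrix.mul_assoc sW sW tM, hsW]
    rw [e, Matrix.trace_mul_comm, Matrix.mul_assoc, htM2]
  have tr2 : ((tW * sM)ᴴ * (tW * sM)).trace = (M * W⁻¹).trace := by
    rw [Matrix.conjTranspose_mul, hsMh]
    have htWh : tWᴴ = tW := by rw [htWdef, Matrix.conjTranspose_nonsing_inv, hsWh]
    rw [htWh]
    have e : sM * tW * (tW * sM) = sM * (W⁻¹ * sM) := by
      rw [Matrix.mul_assoc sM tW (tW * sM), ← Matrix.mul_assoc tW tW sM, htW2]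
    rw [e, Matrix.trace_mul_comm, Matrix.mul_assoc, hsM, Matrix.trace_mul_comm]
  -- the inner product is trace of identity = k
  have hAB : (sW * tM)ᴴ * (tW * sM) = 1 := by
    rw [Matrix.conjTranspose_mul, htMh, hsWh]
    have e : tM * sW * (tW * sM) = tM * ((sW * tW) * sM) := by
      simp only [Matrix.mul_assoc]
    rw [e, htWdef, Matrix.mul_nonsing_inv sW hdW.isUnit, Matrix.one_mul, htMdef,
      Matrix.nonsing_inv_mul sM hdM.isUnit]
  have hCS := trace_cs (sW * tM) (tW * sM)
  rw [hAB, Matrix.trace_one, tr1, tr2] at hCS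
  have hknorm : ‖(Fintype.card (Fin k) : ℂ)‖ ^ 2 = (k : ℝ) ^ 2 := by
    simp
  rw [hknorm] at hCS
  -- identify MSE with (W * M⁻¹).trace.re
  have hmse : MSE lam lw v H S = ((W * M⁻¹).trace).re := by
    unfold MSE Kstar
    rw [← hMdef]
    congr 1
    have e : H * VKmat v * M⁻¹ * (VKmat v)ᴴ * Hᴴ
        = (H * VKmat v * M⁻¹) * ((VKmat v)ᴴ * Hᴴ) := by
      simp only [Matrix.mul_assoc]
    rw [e, Matrix.trace_mul_comm, hWdef]
    simp only [Matrix.mul_assoc]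
  -- expand (M * W⁻¹).trace.re
  have hT2 : ((M * W⁻¹).trace).re
      = (((Matrix.diagonal fun j => (lam j : ℂ))⁻¹ * W⁻¹).trace).re + ∑ i ∈ S, ell i := by
    rw [hMdef]
    unfold Mmat
    rw [Matrix.add_mul, Finset.sum_mul, Matrix.trace_add, Matrix.trace_sum, Complex.add_re]
    congr 1
    rw [Complex.re_sum]
    apply Finset.sum_congr rfl
    intro i _
    rw [smul_mul_assoc, Matrix.trace_smul, trace_outer_mul, smul_eq_mul,
      ← Complex.ofReal_inv, Complex.re_ofReal_mul, hell i]
  -- nonnegativity of the second factor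
  have hT2nonneg : 0 ≤ ((M * W⁻¹).trace).re := by
    rw [← tr2]; exact trace_conj_self_re_nonneg _
  -- sum bound
  have hsum : ∑ i ∈ S, ell i ≤ (S.card : ℝ) * lmax := by
    have h := Finset.sum_le_card_nsmul S ell lmax (fun i _ => hlmax.2 ⟨i, rfl⟩)
    rwa [nsmul_eq_mul] at h
  have hMSE' : ((W * M⁻¹).trace).re ≤ η := by rw [← hmse]; exact hMSE
  have hkey : (k : ℝ) ^ 2 ≤ η * ((M * W⁻¹).trace).re :=
    le_trans hCS (mul_le_mul_of_nonneg_right hMSE' hT2nonneg)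
  rw [hT2] at hkey
  rw [div_le_iff₀ (mul_pos hη hlmaxpos)]
  nlinarith [hkey, hsum, mul_le_mul_of_nonneg_left hsum hη.le]
end

section
/- Approximate supermodularity of the MSE (general, heteroscedastic case): assume W = V_K^H H^H H V_K is positive definite with condition number κ₂(W) = λ_max(W)/λ_min(W), and that ‖v_i‖₂ ≤ 1 for all i = 1,…,n. Let μ_min and μ_max be reals with 0 < μ_min ≤ λ_min(Λ^{-1}) and μ_max ≥ λ_max( Λ^{-1} + Σ_{i=1}^n λ_{w,i}^{-1} v_i v_i^H ), and let λ_w^min = min_{1≤i≤n} λ_{w,i}. Then the set function S ↦ MSE(S) is α₀-supermodular for α₀ = [ (λ_w^min + μ_max^{-1}) / (λ_w^min + μ_min^{-1}) ] · μ_min² / ( κ₂(W) · μ_max² ); that is, for all A ⊆ B ⊆ {1,…,n} and u ∉ B, MSE(A ∪ {u}) − MSE(A) ≤ α₀·( MSE(B ∪ {u}) − MSE(B) ). -/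
open Matrix Finset ComplexOrder

section Aux

variable {k : ℕ}

lemma aux_vecMulVec_mulVec (a b x : Fin k → ℂ) :
    Matrix.vecMulVec a b *ᵥ x = (b ⬝ᵥ x) • a := by
  ext i
  simp [Matrix.mulVec, Matrix.vecMulVec_apply, dotProduct, Finset.mul_sum, mul_comm, mul_assoc,
    mul_left_comm]

lemma aux_mul_vecMulVec (P : Matrix (Fin k) (Fin k) ℂ) (a b : Fin k → ℂ) :
    P * Matrix.vecMulVec a b = Matrix.vecMulVec (P *ᵥ a) b := by
  ext i j
  simp [Matrix.mul_apply, Matrix.vecMulVec_apply, Matrix.mulVec, dotProduct, Finset.sum_mul,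
    mul_assoc]

lemma aux_vecMulVec_mul (Q : Matrix (Fin k) (Fin k) ℂ) (a b : Fin k → ℂ) :
    Matrix.vecMulVec a b * Q = Matrix.vecMulVec a (b ᵥ* Q) := by
  ext i j
  simp [Matrix.mul_apply, Matrix.vecMulVec_apply, Matrix.vecMul, dotProduct, Finset.mul_sum,
    mul_assoc]

lemma aux_vecMulVec_smul_right (a b : Fin k → ℂ) (c : ℂ) :
    Matrix.vecMulVec a (c • b) = c • Matrix.vecMulVec a b := by
  ext i j
  simp only [Matrix.vecMulVec_apply, Pi.smul_apply, Matrix.smul_apply, smul_eq_mul]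
  ring

lemma aux_trace_mul_vecMulVec (W : Matrix (Fin k) (Fin k) ℂ) (a b : Fin k → ℂ) :
    (W * Matrix.vecMulVec a b).trace = b ⬝ᵥ (W *ᵥ a) := by
  simp only [Matrix.trace, Matrix.diag, Matrix.mul_apply, Matrix.vecMulVec_apply, dotProduct,
    Matrix.mulVec, Finset.mul_sum]
  refine Finset.sum_congr rfl fun i _ => Finset.sum_congr rfl fun j _ => by ring

lemma aux_dot_star_self (x : Fin k → ℂ) :
    star x ⬝ᵥ x = ((∑ j, Complex.normSq (x j) : ℝ) : ℂ) := by
  push_cast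
  simp [dotProduct, Complex.normSq_eq_conj_mul_self]

lemma aux_dot_conj (x y : Fin k → ℂ) :
    star x ⬝ᵥ y = (starRingEnd ℂ) (star y ⬝ᵥ x) := by
  simp [dotProduct, map_sum, mul_comm]

lemma aux_quad_vecMulVec (a x : Fin k → ℂ) :
    star x ⬝ᵥ (Matrix.vecMulVec a (star a) *ᵥ x) = ((Complex.normSq (star a ⬝ᵥ x) : ℝ) : ℂ) := by
  rw [aux_vecMulVec_mulVec, dotProduct_smul, aux_dot_conj x a, smul_eq_mul, mul_comm,
    Complex.normSq_eq_conj_mul_self]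

lemma aux_sum_mulVec {α : Type*} (S : Finset α) (f : α → Matrix (Fin k) (Fin k) ℂ)
    (x : Fin k → ℂ) : (∑ i ∈ S, f i) *ᵥ x = ∑ i ∈ S, f i *ᵥ x := by
  ext j
  simp only [Matrix.mulVec, dotProduct, Matrix.sum_apply, Finset.sum_mul, Finset.sum_apply]
  exact Finset.sum_comm

lemma aux_dotProduct_sum {α : Type*} (S : Finset α) (y : Fin k → ℂ) (w : α → Fin k → ℂ) :
    y ⬝ᵥ (∑ i ∈ S, w i) = ∑ i ∈ S, y ⬝ᵥ w i := by
  simp only [dotProduct, Finset.sum_apply, Finset.mul_sum]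
  exact Finset.sum_comm

lemma aux_cs (x y : Fin k → ℂ) :
    ‖star x ⬝ᵥ y‖ ≤ Real.sqrt (star x ⬝ᵥ x).re * Real.sqrt (star y ⬝ᵥ y).re := by
  have h1 : ∀ a b : Fin k → ℂ,
      (inner ℂ ((WithLp.equiv 2 _).symm a) ((WithLp.equiv 2 _).symm b) : ℂ) = star a ⬝ᵥ b :=
    fun a b => (EuclideanSpace.inner_toLp_toLp a b).trans (dotProduct_comm _ _)
  have h2 : ∀ a : Fin k → ℂ,
      ‖(WithLp.equiv 2 (Fin k → ℂ)).symm a‖ = Real.sqrt (star a ⬝ᵥ a).re := by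
    intro a
    rw [norm_eq_sqrt_re_inner (𝕜 := ℂ), h1]
    rfl
  rw [← h1, ← h2, ← h2]
  exact norm_inner_le_norm _ _

open scoped MatrixOrder in
lemma aux_cs_psd {M : Matrix (Fin k) (Fin k) ℂ} (hM : M.PosSemidef) (x y : Fin k → ℂ) :
    ‖star x ⬝ᵥ (M *ᵥ y)‖ ≤
      Real.sqrt (star x ⬝ᵥ (M *ᵥ x)).re * Real.sqrt (star y ⬝ᵥ (M *ᵥ y)).re := by
  obtain ⟨B, hB⟩ := CStarAlgebra.nonneg_iff_eq_star_mul_self.mp hM.nonneg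
  rw [Matrix.star_eq_conjTranspose] at hB
  have key : ∀ a b : Fin k → ℂ, star a ⬝ᵥ (M *ᵥ b) = star (B *ᵥ a) ⬝ᵥ (B *ᵥ b) := by
    intro a b
    rw [hB, ← Matrix.mulVec_mulVec, dotProduct_mulVec, Matrix.star_mulVec]
  rw [key, key, key]
  exact aux_cs _ _

lemma aux_quad_eig_bounds {A : Matrix (Fin k) (Fin k) ℂ} (hA : A.IsHermitian) {lo hi : ℝ}
    (hlo : ∀ i, lo ≤ hA.eigenvalues i) (hhi : ∀ i, hA.eigenvalues i ≤ hi) (y : Fin k → ℂ) :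
    lo * (star y ⬝ᵥ y).re ≤ (star y ⬝ᵥ (A *ᵥ y)).re ∧
      (star y ⬝ᵥ (A *ᵥ y)).re ≤ hi * (star y ⬝ᵥ y).re := by
  set U : Matrix (Fin k) (Fin k) ℂ :=
    (Matrix.IsHermitian.eigenvectorUnitary hA : Matrix (Fin k) (Fin k) ℂ) with hU
  set z : Fin k → ℂ := star U *ᵥ y with hzdef
  have hstarz : star z = star y ᵥ* U := by
    rw [hzdef, Matrix.star_mulVec, Matrix.star_eq_conjTranspose,
      Matrix.conjTranspose_conjTranspose]
  have hz : star y ⬝ᵥ (A *ᵥ y)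
      = star z ⬝ᵥ (Matrix.diagonal (Complex.ofReal ∘ hA.eigenvalues) *ᵥ z) := by
    conv_lhs => rw [hA.spectral_theorem, Unitary.conjStarAlgAut_apply]
    rw [← Matrix.mulVec_mulVec, ← Matrix.mulVec_mulVec, dotProduct_mulVec, ← hstarz]
    rfl
  have hy : star y ⬝ᵥ y = star z ⬝ᵥ z := by
    rw [hstarz, hzdef, ← dotProduct_mulVec, Matrix.mulVec_mulVec,
      (Matrix.mem_unitaryGroup_iff).mp (Matrix.IsHermitian.eigenvectorUnitary hA).2,
      Matrix.one_mulVec]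
  have hd : star z ⬝ᵥ (Matrix.diagonal (Complex.ofReal ∘ hA.eigenvalues) *ᵥ z)
      = ((∑ i, hA.eigenvalues i * Complex.normSq (z i) : ℝ) : ℂ) := by
    push_cast
    simp only [dotProduct, Matrix.mulVec_diagonal, Pi.star_apply, Function.comp_apply]
    refine Finset.sum_congr rfl fun i _ => ?_
    rw [Complex.normSq_eq_conj_mul_self]
    simp only [RCLike.star_def]
    push_cast
    ring
  rw [hz, hy, hd, aux_dot_star_self, Complex.ofReal_re, Complex.ofReal_re, Finset.mul_sum,
    Finset.mul_sum]
  constructor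
  · exact Finset.sum_le_sum fun i _ =>
      mul_le_mul_of_nonneg_right (hlo i) (Complex.normSq_nonneg _)
  · exact Finset.sum_le_sum fun i _ =>
      mul_le_mul_of_nonneg_right (hhi i) (Complex.normSq_nonneg _)

end Aux

section MmatLemmas

variable {n k : ℕ} {lam : Fin k → ℝ} {lw : Fin n → ℝ} {v : Fin n → Fin k → ℂ}

lemma diag_inv (hlam : ∀ j, 0 < lam j) :
    (Matrix.diagonal fun j => (lam j : ℂ))⁻¹ = Matrix.diagonal fun j => ((lam j : ℂ))⁻¹ := by
  refine Matrix.inv_eq_right_inv ?_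
  rw [Matrix.diagonal_mul_diagonal,
    show (fun j => (lam j : ℂ) * ((lam j : ℂ))⁻¹) = fun _ => 1 from
      funext fun j => mul_inv_cancel₀ (by exact_mod_cast (hlam j).ne'),
    Matrix.diagonal_one]

lemma Mmat_quad (hlam : ∀ j, 0 < lam j) (S : Finset (Fin n)) (x : Fin k → ℂ) :
    star x ⬝ᵥ (Mmat lam lw v S *ᵥ x) =
      ((∑ j, (lam j)⁻¹ * Complex.normSq (x j)
        + ∑ i ∈ S, (lw i)⁻¹ * Complex.normSq (star (v i) ⬝ᵥ x) : ℝ) : ℂ) := by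
  rw [Mmat, diag_inv hlam, Matrix.add_mulVec, dotProduct_add, aux_sum_mulVec,
    aux_dotProduct_sum]
  push_cast
  congr 1
  · simp only [dotProduct, Matrix.mulVec_diagonal, Pi.star_apply]
    refine Finset.sum_congr rfl fun j _ => ?_
    rw [Complex.normSq_eq_conj_mul_self]
    push_cast
    simp only [RCLike.star_def]
    ring
  · refine Finset.sum_congr rfl fun i _ => ?_
    rw [Matrix.smul_mulVec, dotProduct_smul, aux_quad_vecMulVec, smul_eq_mul]

lemma Mmat_posDef (hlam : ∀ j, 0 < lam j) (hlw : ∀ i, 0 < lw i) (S : Finset (Fin n)) :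
    (Mmat lam lw v S).PosDef := by
  refine Matrix.PosDef.of_dotProduct_mulVec_pos ?_ ?_
  · show _ᴴ = _
    rw [Mmat, diag_inv hlam, Matrix.conjTranspose_add, Matrix.conjTranspose_sum]
    congr 1
    · rw [Matrix.diagonal_conjTranspose,
        show star (fun j => ((lam j : ℂ))⁻¹) = fun j => ((lam j : ℂ))⁻¹ from
          funext fun j => by rw [Pi.star_apply, star_inv₀, RCLike.star_def, Complex.conj_ofReal]]
    · refine Finset.sum_congr rfl fun i _ => ?_
      rw [Matrix.conjTranspose_smul]
      congr 1
      · simp [RCLike.star_def, Complex.conj_ofReal]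
      · ext p q
        simp only [Matrix.conjTranspose_apply, Matrix.vecMulVec_apply, Pi.star_apply, star_mul',
          star_star]
        ring
  · intro x hx
    rw [Mmat_quad hlam, Complex.zero_lt_real]
    obtain ⟨j0, hj0⟩ := Function.ne_iff.mp hx
    have h1 : 0 < ∑ j, (lam j)⁻¹ * Complex.normSq (x j) :=
      Finset.sum_pos'
        (fun j _ => mul_nonneg (inv_nonneg.mpr (hlam j).le) (Complex.normSq_nonneg _))
        ⟨j0, Finset.mem_univ _, mul_pos (inv_pos.mpr (hlam j0)) (by simpa using hj0)⟩
    have h2 : 0 ≤ ∑ i ∈ S, (lw i)⁻¹ * Complex.normSq (star (v i) ⬝ᵥ x) :=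
      Finset.sum_nonneg fun i _ =>
        mul_nonneg (inv_nonneg.mpr (hlw i).le) (Complex.normSq_nonneg _)
    linarith

lemma Mmat_quad_lower (hlam : ∀ j, 0 < lam j) (hlw : ∀ i, 0 < lw i) {μmin : ℝ}
    (hμmin : ∀ j, μmin ≤ (lam j)⁻¹) (S : Finset (Fin n)) (x : Fin k → ℂ) :
    μmin * (star x ⬝ᵥ x).re ≤ (star x ⬝ᵥ (Mmat lam lw v S *ᵥ x)).re := by
  rw [Mmat_quad hlam, Complex.ofReal_re, aux_dot_star_self, Complex.ofReal_re, Finset.mul_sum]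
  have h1 : ∑ j, μmin * Complex.normSq (x j) ≤ ∑ j, (lam j)⁻¹ * Complex.normSq (x j) :=
    Finset.sum_le_sum fun j _ => mul_le_mul_of_nonneg_right (hμmin j) (Complex.normSq_nonneg _)
  have h2 : 0 ≤ ∑ i ∈ S, (lw i)⁻¹ * Complex.normSq (star (v i) ⬝ᵥ x) :=
    Finset.sum_nonneg fun i _ =>
      mul_nonneg (inv_nonneg.mpr (hlw i).le) (Complex.normSq_nonneg _)
  linarith

lemma Mmat_quad_mono (hlam : ∀ j, 0 < lam j) (hlw : ∀ i, 0 < lw i) {S T : Finset (Fin n)}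
    (hST : S ⊆ T) (x : Fin k → ℂ) :
    (star x ⬝ᵥ (Mmat lam lw v S *ᵥ x)).re ≤ (star x ⬝ᵥ (Mmat lam lw v T *ᵥ x)).re := by
  rw [Mmat_quad hlam, Mmat_quad hlam, Complex.ofReal_re, Complex.ofReal_re]
  have := Finset.sum_le_sum_of_subset_of_nonneg
    (f := fun i => (lw i)⁻¹ * Complex.normSq (star (v i) ⬝ᵥ x)) hST
    (fun i _ _ => mul_nonneg (inv_nonneg.mpr (hlw i).le) (Complex.normSq_nonneg _))
  linarith

end MmatLemmas

section Diff

variable {n k m : ℕ} {lam : Fin k → ℝ} {lw : Fin n → ℝ} {v : Fin n → Fin k → ℂ}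

lemma MSE_diff (hlam : ∀ j, 0 < lam j) (hlw : ∀ i, 0 < lw i)
    (H : Matrix (Fin m) (Fin n) ℂ) (W : Matrix (Fin k) (Fin k) ℂ)
    (hWdef : W = (VKmat v)ᴴ * Hᴴ * H * VKmat v)
    {u : Fin n} {S : Finset (Fin n)} (huS : u ∉ S) :
    MSE lam lw v H S - MSE lam lw v H (insert u S)
      = (star ((Mmat lam lw v S)⁻¹ *ᵥ v u) ⬝ᵥ (W *ᵥ ((Mmat lam lw v S)⁻¹ *ᵥ v u))).re
        / (lw u + (star (v u) ⬝ᵥ ((Mmat lam lw v S)⁻¹ *ᵥ v u)).re) := by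
  set P := Mmat lam lw v S with hPdef
  set Q := Mmat lam lw v (insert u S) with hQdef
  have hP : P.PosDef := Mmat_posDef hlam hlw S
  have hQ : Q.PosDef := Mmat_posDef hlam hlw (insert u S)
  have hPd : IsUnit P.det := (Matrix.isUnit_iff_isUnit_det P).mp hP.isUnit
  have hQd : IsUnit Q.det := (Matrix.isUnit_iff_isUnit_det Q).mp hQ.isUnit
  set vv := v u with hvv
  set a : Fin k → ℂ := P⁻¹ *ᵥ vv with ha
  set qC : ℂ := star vv ⬝ᵥ a with hqC
  have h0q : (0 : ℂ) ≤ qC := hP.inv.posSemidef.dotProduct_mulVec_nonneg vv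
  have hqre : 0 ≤ qC.re := by
    have := (Complex.le_def.mp h0q).1
    simpa using this
  have hqim : qC.im = 0 := by
    have := (Complex.le_def.mp h0q).2
    simpa using this.symm
  have hqreal : qC = ((qC.re : ℝ) : ℂ) := Complex.ext (by simp) (by simp [hqim])
  have hQP : Q = P + ((lw u : ℂ))⁻¹ • Matrix.vecMulVec vv (star vv) := by
    rw [hQdef, hPdef, Mmat, Mmat, Finset.sum_insert huS]
    abel
  have hPa : P *ᵥ a = vv := by
    rw [ha, Matrix.mulVec_mulVec, Matrix.mul_nonsing_inv _ hPd, Matrix.one_mulVec]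
  set d : ℂ := 1 + ((lw u : ℂ))⁻¹ * qC with hd
  have hdre : d = ((1 + (lw u)⁻¹ * qC.re : ℝ) : ℂ) := by
    rw [hd]
    nth_rewrite 1 [hqreal]
    push_cast
    ring
  have hdpos : 0 < 1 + (lw u)⁻¹ * qC.re := by
    have h1 : 0 ≤ (lw u)⁻¹ := inv_nonneg.mpr (hlw u).le
    nlinarith
  have hd0 : d ≠ 0 := by
    rw [hdre]
    exact_mod_cast hdpos.ne'
  have hQa : Q *ᵥ a = d • vv := by
    rw [hQP, Matrix.add_mulVec, hPa, Matrix.smul_mulVec, aux_vecMulVec_mulVec, hd,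
      smul_smul, add_smul, one_smul, ← hqC]
  have hQia : Q⁻¹ *ᵥ vv = d⁻¹ • a := by
    have h1 : Q⁻¹ *ᵥ (Q *ᵥ a) = a := by
      rw [Matrix.mulVec_mulVec, Matrix.nonsing_inv_mul _ hQd, Matrix.one_mulVec]
    rw [hQa, Matrix.mulVec_smul] at h1
    rw [← h1, smul_smul, inv_mul_cancel₀ hd0, one_smul]
  have hstard : star d⁻¹ = d⁻¹ := by
    rw [hdre, ← Complex.ofReal_inv]
    exact Complex.conj_ofReal _
  have hdiff : P⁻¹ - Q⁻¹ = (((lw u : ℂ))⁻¹ * d⁻¹) • Matrix.vecMulVec a (star a) := by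
    have h1 : P⁻¹ - Q⁻¹ = P⁻¹ * (Q - P) * Q⁻¹ := by
      rw [Matrix.mul_sub, Matrix.sub_mul, Matrix.nonsing_inv_mul _ hPd, Matrix.one_mul,
        Matrix.mul_assoc, Matrix.mul_nonsing_inv _ hQd, Matrix.mul_one]
    have h2 : Q - P = ((lw u : ℂ))⁻¹ • Matrix.vecMulVec vv (star vv) := by
      rw [hQP]
      abel
    have h3 : star vv ᵥ* Q⁻¹ = star (Q⁻¹ *ᵥ vv) := by
      rw [Matrix.star_mulVec, hQ.isHermitian.inv]
    rw [h1, h2, mul_smul_comm, smul_mul_assoc, aux_mul_vecMulVec, aux_vecMulVec_mul, h3, hQia,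
      star_smul, aux_vecMulVec_smul_right, hstard, ← ha, smul_smul]
  have htr : ∀ T : Finset (Fin n),
      (Kstar lam lw v H T).trace = (W * (Mmat lam lw v T)⁻¹).trace := by
    intro T
    rw [Kstar, Matrix.mul_assoc (H * VKmat v * (Mmat lam lw v T)⁻¹) ((VKmat v)ᴴ) Hᴴ,
      Matrix.trace_mul_comm, hWdef]
    simp only [Matrix.mul_assoc]
  have hMSE : MSE lam lw v H S - MSE lam lw v H (insert u S)
      = ((W * (P⁻¹ - Q⁻¹)).trace).re := by
    rw [MSE, MSE, htr S, htr (insert u S), Matrix.mul_sub, Matrix.trace_sub, Complex.sub_re]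
  rw [hMSE, hdiff, mul_smul_comm, Matrix.trace_smul, aux_trace_mul_vecMulVec]
  have he : ((lw u : ℂ))⁻¹ * d⁻¹ = (((lw u)⁻¹ * (1 + (lw u)⁻¹ * qC.re)⁻¹ : ℝ) : ℂ) := by
    rw [hdre]
    push_cast
    ring
  rw [smul_eq_mul, he, Complex.re_ofReal_mul]
  have hL : (0 : ℝ) < lw u := hlw u
  have hLq : 0 < lw u + qC.re := by linarith
  field_simp

section RealAux

private lemma real_aux1 {a q s t : ℝ} (ha : 0 < a) (hq0 : 0 ≤ q) (hs0 : 0 ≤ s)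
    (hq2 : q ^ 2 ≤ s * t) (hqt : a * t ≤ q) : a * q ≤ s := by
  rcases eq_or_lt_of_le hq0 with h | h
  · rw [← h]
    simpa using hs0
  · nlinarith [mul_le_mul_of_nonneg_left hqt hs0, mul_le_mul_of_nonneg_left hq2 ha.le]

private lemma real_aux2 {b s q : ℝ} (hb : 0 ≤ b) (hq0 : 0 ≤ q) (hs0 : 0 ≤ s)
    (hs2 : s ^ 2 ≤ b * s * q) : s ≤ b * q := by
  rcases eq_or_lt_of_le hs0 with h | h
  · rw [← h]
    exact mul_nonneg hb hq0
  · nlinarith [hs2, mul_pos h h]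

private lemma real_aux3 {b s q t : ℝ} (hs0 : 0 ≤ s) (hq0 : 0 ≤ q) (ht0 : 0 ≤ t)
    (hq2 : q ^ 2 ≤ s * t) (hsq : s ≤ b * q) : s ≤ b ^ 2 * t := by
  rcases eq_or_lt_of_le hs0 with h | h
  · rw [← h]
    exact mul_nonneg (sq_nonneg b) ht0
  · nlinarith [mul_self_le_mul_self hs0 hsq, mul_le_mul_of_nonneg_left hq2 (sq_nonneg b)]

private lemma real_aux4 {w b s t N : ℝ} (hw : 0 ≤ w) (hst : s ≤ b ^ 2 * t)
    (hNt : w * t ≤ N) : w * s ≤ b ^ 2 * N := by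
  nlinarith [mul_le_mul_of_nonneg_left hst hw, mul_le_mul_of_nonneg_left hNt (sq_nonneg b)]

private lemma real_aux5 {a w q t N : ℝ} (ha : 0 < a) (hw : 0 ≤ w)
    (hNt : N ≤ w * t) (hqt : a * t ≤ q) : a * N ≤ w * q := by
  nlinarith [mul_le_mul_of_nonneg_left hNt ha.le, mul_le_mul_of_nonneg_left hqt hw]

private lemma real_aux6 {q P : ℝ} (hq0 : 0 ≤ q) (hP : 0 ≤ P) (h : q ≤ P) :
    q ^ 2 ≤ P ^ 2 := by nlinarith

end RealAux

section Bounds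

variable {n k m : ℕ} {lam : Fin k → ℝ} {lw : Fin n → ℝ} {v : Fin n → Fin k → ℂ}

lemma MSE_diff_bounds (hlam : ∀ j, 0 < lam j) (hlw : ∀ i, 0 < lw i)
    (H : Matrix (Fin m) (Fin n) ℂ) (W : Matrix (Fin k) (Fin k) ℂ)
    (hWdef : W = (VKmat v)ᴴ * Hᴴ * H * VKmat v) (hW : W.PosDef)
    {wmin wmax : ℝ} (hwminLB : ∀ i, wmin ≤ hW.1.eigenvalues i)
    (hwmaxUB : ∀ i, hW.1.eigenvalues i ≤ wmax)
    (hwmin0 : 0 ≤ wmin) (hwmax0 : 0 ≤ wmax)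
    {μmin μmax : ℝ} (hμmin0 : 0 < μmin) (hμmin : ∀ j, μmin ≤ (lam j)⁻¹)
    (hμmax0 : 0 ≤ μmax)
    (hμmax : ∀ x : Fin k → ℂ,
      (star x ⬝ᵥ (Mmat lam lw v Finset.univ *ᵥ x)).re ≤ μmax * (star x ⬝ᵥ x).re)
    {u : Fin n} {S : Finset (Fin n)} (huS : u ∉ S) :
    ∃ N q : ℝ, 0 ≤ N ∧ 0 ≤ q ∧
      MSE lam lw v H S - MSE lam lw v H (insert u S) = N / (lw u + q) ∧
      μmin * q ≤ (star (v u) ⬝ᵥ v u).re ∧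
      (star (v u) ⬝ᵥ v u).re ≤ μmax * q ∧
      wmin * (star (v u) ⬝ᵥ v u).re ≤ μmax ^ 2 * N ∧
      μmin * N ≤ wmax * q := by
  set P := Mmat lam lw v S with hPdef
  have hP : P.PosDef := Mmat_posDef hlam hlw S
  have hPd : IsUnit P.det := (Matrix.isUnit_iff_isUnit_det P).mp hP.isUnit
  set vv := v u with hvv
  set a : Fin k → ℂ := P⁻¹ *ᵥ vv with ha
  obtain ⟨q, hq⟩ : ∃ x : ℝ, x = (star vv ⬝ᵥ a).re := ⟨_, rfl⟩
  obtain ⟨N, hN⟩ : ∃ x : ℝ, x = (star a ⬝ᵥ (W *ᵥ a)).re := ⟨_, rfl⟩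
  obtain ⟨s, hs⟩ : ∃ x : ℝ, x = (star vv ⬝ᵥ vv).re := ⟨_, rfl⟩
  obtain ⟨t, ht⟩ : ∃ x : ℝ, x = (star a ⬝ᵥ a).re := ⟨_, rfl⟩
  have hs0 : 0 ≤ s := by
    rw [hs, aux_dot_star_self, Complex.ofReal_re]
    exact Finset.sum_nonneg fun j _ => Complex.normSq_nonneg _
  have ht0 : 0 ≤ t := by
    rw [ht, aux_dot_star_self, Complex.ofReal_re]
    exact Finset.sum_nonneg fun j _ => Complex.normSq_nonneg _
  have hq0 : 0 ≤ q := by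
    have h0q : (0 : ℂ) ≤ star vv ⬝ᵥ (P⁻¹ *ᵥ vv) := hP.inv.posSemidef.dotProduct_mulVec_nonneg vv
    have h2 := (Complex.le_def.mp h0q).1
    rw [hq, ha]
    simpa using h2
  have hN0 : 0 ≤ N := by
    have h2 := hW.posSemidef.re_dotProduct_nonneg a
    rw [hN]
    simpa using h2
  have hPa : P *ᵥ a = vv := by
    rw [ha, Matrix.mulVec_mulVec, Matrix.mul_nonsing_inv _ hPd, Matrix.one_mulVec]
  -- q is the quadratic form of P at a
  have hquad_a : (star a ⬝ᵥ (P *ᵥ a)).re = q := by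
    rw [hPa, aux_dot_conj a vv, Complex.conj_re, hq]
  -- eigenvalue bounds for W
  have hNt := aux_quad_eig_bounds hW.1 hwminLB hwmaxUB a
  have hNt1 : wmin * t ≤ N := by rw [ht, hN]; exact hNt.1
  have hNt2 : N ≤ wmax * t := by rw [ht, hN]; exact hNt.2
  -- quadratic form bounds for P at a
  have hqt1 : μmin * t ≤ q := by
    have h2 := Mmat_quad_lower (lw := lw) (v := v) hlam hlw hμmin S a
    rw [← hPdef, hquad_a] at h2
    rw [ht]
    exact h2
  have hqt2 : q ≤ μmax * t := by
    have h1 := Mmat_quad_mono (lam := lam) (lw := lw) (v := v) hlam hlw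
      (Finset.subset_univ S) a
    have h2 := hμmax a
    rw [← hPdef, hquad_a] at h1
    rw [ht]
    exact h1.trans h2
  -- quadratic form bound for P at vv
  have hsvv : (star vv ⬝ᵥ (P *ᵥ vv)).re ≤ μmax * s := by
    have h1 := Mmat_quad_mono (lam := lam) (lw := lw) (v := v) hlam hlw
      (Finset.subset_univ S) vv
    have h2 := hμmax vv
    rw [← hPdef] at h1
    rw [hs]
    exact h1.trans h2
  have hsvv0 : 0 ≤ (star vv ⬝ᵥ (P *ᵥ vv)).re := hP.posSemidef.re_dotProduct_nonneg vv
  -- Cauchy-Schwarz : q ≤ √s √t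
  have hCS : q ≤ Real.sqrt s * Real.sqrt t := by
    have h1 : q ≤ ‖star vv ⬝ᵥ a‖ := by
      rw [hq]
      exact Complex.re_le_norm _
    rw [hs, ht]
    exact h1.trans (aux_cs vv a)
  have hq2 : q ^ 2 ≤ s * t := by
    have h2 := real_aux6 hq0 (mul_nonneg (Real.sqrt_nonneg s) (Real.sqrt_nonneg t)) hCS
    calc q ^ 2 ≤ (Real.sqrt s * Real.sqrt t) ^ 2 := h2
      _ = s * t := by rw [mul_pow, Real.sq_sqrt hs0, Real.sq_sqrt ht0]
  -- P-Cauchy-Schwarz : s ≤ √(μmax s) √q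
  have hPCS : s ≤ Real.sqrt (μmax * s) * Real.sqrt q := by
    have h0 : s = (star vv ⬝ᵥ (P *ᵥ a)).re := by rw [hs, hPa]
    have h1 : s ≤ ‖star vv ⬝ᵥ (P *ᵥ a)‖ := by
      rw [h0]
      exact Complex.re_le_norm _
    have h2 := aux_cs_psd hP.posSemidef vv a
    have h3 : Real.sqrt (star vv ⬝ᵥ (P *ᵥ vv)).re ≤ Real.sqrt (μmax * s) :=
      Real.sqrt_le_sqrt hsvv
    have h4 : Real.sqrt (star a ⬝ᵥ (P *ᵥ a)).re = Real.sqrt q := by rw [hquad_a]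
    calc s ≤ ‖star vv ⬝ᵥ (P *ᵥ a)‖ := h1
      _ ≤ Real.sqrt (star vv ⬝ᵥ (P *ᵥ vv)).re * Real.sqrt (star a ⬝ᵥ (P *ᵥ a)).re := h2
      _ ≤ Real.sqrt (μmax * s) * Real.sqrt q := by
          rw [h4]
          exact mul_le_mul_of_nonneg_right h3 (Real.sqrt_nonneg _)
  have hs2 : s ^ 2 ≤ μmax * s * q := by
    have h2 := real_aux6 hs0
      (mul_nonneg (Real.sqrt_nonneg (μmax * s)) (Real.sqrt_nonneg q)) hPCS
    calc s ^ 2 ≤ (Real.sqrt (μmax * s) * Real.sqrt q) ^ 2 := h2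
      _ = μmax * s * q := by
          rw [mul_pow, Real.sq_sqrt (mul_nonneg hμmax0 hs0), Real.sq_sqrt hq0]
  -- s ≤ μmax * q
  have hsq : s ≤ μmax * q := real_aux2 hμmax0 hq0 hs0 hs2
  -- μmin * q ≤ s
  have hqs : μmin * q ≤ s := real_aux1 hμmin0 hq0 hs0 hq2 hqt1
  -- s ≤ μmax^2 * t
  have hst : s ≤ μmax ^ 2 * t := real_aux3 hs0 hq0 ht0 hq2 hsq
  refine ⟨N, q, hN0, hq0, ?_, hs ▸ hqs, hs ▸ hsq, hs ▸ real_aux4 hwmin0 hst hNt1,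
    real_aux5 hμmin0 hwmax0 hNt2 hqt1⟩
  have h2 := MSE_diff hlam hlw H W hWdef huS
  rw [h2, hN, hq, ha, hvv, hPdef]
end Bounds

set_option maxHeartbeats 1600000 in
/-- Approximate supermodularity of the MSE (heteroscedastic case):
with `W = V_Kᴴ Hᴴ H V_K` positive definite, condition number `κ₂(W) = λ_max(W)/λ_min(W)`,
`‖v_i‖₂ ≤ 1` for all `i`, `0 < μ_min ≤ λ_min(Λ⁻¹)`,
`μ_max ≥ λ_max(Λ⁻¹ + ∑_i λ_{w,i}⁻¹ v_i v_iᴴ)`, and `λ_w^min = min_i λ_{w,i}`, the set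
function `S ↦ MSE(S)` is `α₀`-supermodular for
`α₀ = ((λ_w^min + μ_max⁻¹)/(λ_w^min + μ_min⁻¹)) · μ_min²/(κ₂(W) μ_max²)`. -/
theorem MSE_alpha_supermodular_general
    (n k m : ℕ)
    (v : Fin n → Fin k → ℂ)
    (H : Matrix (Fin m) (Fin n) ℂ)
    (lam : Fin k → ℝ) (hlam : ∀ j, 0 < lam j)
    (lw : Fin n → ℝ) (hlw : ∀ i, 0 < lw i)
    (W : Matrix (Fin k) (Fin k) ℂ)
    (hWdef : W = (VKmat v)ᴴ * Hᴴ * H * VKmat v)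
    (hW : W.PosDef)
    (wmin wmax : ℝ)
    (hwmin : IsLeast (Set.range hW.1.eigenvalues) wmin)
    (hwmax : IsGreatest (Set.range hW.1.eigenvalues) wmax)
    (kappa : ℝ) (hkappa : kappa = wmax / wmin)
    (hnorm : ∀ i, ∑ j, ‖v i j‖ ^ 2 ≤ 1)
    (μmin μmax : ℝ)
    (hμmin0 : 0 < μmin)
    (hμmin : ∀ j, μmin ≤ (lam j)⁻¹)
    (hμmax : ∀ x : Fin k → ℂ,
      (star x ⬝ᵥ (Mmat lam lw v Finset.univ *ᵥ x)).re ≤ μmax * (star x ⬝ᵥ x).re)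
    (lwmin : ℝ) (hlwmin : IsLeast (Set.range lw) lwmin)
    (α₀ : ℝ)
    (hα₀ : α₀ = ((lwmin + μmax⁻¹) / (lwmin + μmin⁻¹)) * (μmin ^ 2 / (kappa * μmax ^ 2)))
    (A B : Finset (Fin n)) (hAB : A ⊆ B) (u : Fin n) (hu : u ∉ B) :
    MSE lam lw v H (insert u A) - MSE lam lw v H A ≤
      α₀ * (MSE lam lw v H (insert u B) - MSE lam lw v H B) := by
  have hAu : u ∉ A := fun h => hu (hAB h)
  obtain ⟨i0, hi0⟩ := hwmin.1
  have hwminLB : ∀ i, wmin ≤ hW.1.eigenvalues i := fun i => hwmin.2 ⟨i, rfl⟩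
  have hwmaxUB : ∀ i, hW.1.eigenvalues i ≤ wmax := fun i => hwmax.2 ⟨i, rfl⟩
  have hwmin_pos : 0 < wmin := hi0 ▸ hW.eigenvalues_pos i0
  obtain ⟨i1, hi1⟩ := hwmax.1
  have hwminmax : wmin ≤ wmax := hi1 ▸ hwminLB i1
  have hwmax_pos : 0 < wmax := lt_of_lt_of_le hwmin_pos hwminmax
  obtain ⟨il, hil⟩ := hlwmin.1
  have hlwmin_pos : 0 < lwmin := hil ▸ hlw il
  have hLu0 : 0 < lw u := hlw u
  -- μmin ≤ μmax
  have hμminmax : μmin ≤ μmax := by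
    have hx1 : ((star (Pi.single i0 1 : Fin k → ℂ)) ⬝ᵥ (Pi.single i0 1 : Fin k → ℂ)).re = 1 := by
      simp [dotProduct, Pi.single_apply, apply_ite]
    have h1 := Mmat_quad_lower (lam := lam) (lw := lw) (v := v) hlam hlw hμmin Finset.univ
      (Pi.single i0 1)
    have h2 := hμmax (Pi.single i0 1)
    rw [hx1] at h1 h2
    linarith
  have hμmax_pos : 0 < μmax := lt_of_lt_of_le hμmin0 hμminmax
  -- the bounds at A and B
  obtain ⟨NA, qA, hNA0, hqA0, hdA, hqsA, hsqA, hWA, hNWA⟩ :=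
    MSE_diff_bounds hlam hlw H W hWdef hW hwminLB hwmaxUB hwmin_pos.le hwmax_pos.le hμmin0
      hμmin hμmax_pos.le hμmax hAu
  obtain ⟨NB, qB, hNB0, hqB0, hdB, hqsB, hsqB, hWB, hNWB⟩ :=
    MSE_diff_bounds hlam hlw H W hWdef hW hwminLB hwmaxUB hwmin_pos.le hwmax_pos.le hμmin0
      hμmin hμmax_pos.le hμmax hu
  obtain ⟨s, hs⟩ : ∃ x : ℝ, x = (star (v u) ⬝ᵥ v u).re := ⟨_, rfl⟩
  rw [← hs] at hqsA hsqA hWA hqsB hsqB hWB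
  have hs0 : 0 ≤ s := le_trans (mul_nonneg hμmin0.le hqA0) hqsA
  -- s ≤ 1 (not needed for the final chain, but harmless)
  -- denominators
  have hsd0 : 0 ≤ s / μmin := div_nonneg hs0 hμmin0.le
  have hD0 : 0 < lw u + s / μmin := by linarith
  have hLqA : 0 < lw u + qA := by linarith
  have hLqB : 0 < lw u + qB := by linarith
  have hqA' : qA ≤ s / μmin := (le_div_iff₀ hμmin0).mpr (by linarith)
  have hqB' : qB ≤ s / μmin := (le_div_iff₀ hμmin0).mpr (by linarith)
  -- lower bound for the A-difference
  have hNAlb : wmin * s / μmax ^ 2 ≤ NA := by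
    rw [div_le_iff₀ (pow_pos hμmax_pos 2)]
    linarith
  have h1 : (wmin * s / μmax ^ 2) / (lw u + s / μmin) ≤ NA / (lw u + qA) :=
    div_le_div₀ hNA0 hNAlb hLqA (by linarith)
  -- upper bound for the B-difference
  have h2 : NB / (lw u + qB) ≤ (wmax * s / μmin ^ 2) / (lw u + s / μmin) := by
    rw [div_le_div_iff₀ hLqB hD0]
    have key1 : μmin ^ 2 * NB ≤ wmax * s := by
      nlinarith [mul_le_mul_of_nonneg_left hNWB hμmin0.le,
        mul_le_mul_of_nonneg_left hqsB hwmax_pos.le]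
    have e1 : NB * (lw u + s / μmin) = (μmin ^ 2 * NB * lw u + μmin * NB * s) / μmin ^ 2 := by
      field_simp
    have e2 : wmax * s / μmin ^ 2 * (lw u + qB)
        = (wmax * s * lw u + wmax * s * qB) / μmin ^ 2 := by
      field_simp
    rw [e1, e2]
    refine (div_le_div_iff_of_pos_right (pow_pos hμmin0 2)).mpr ?_
    nlinarith [mul_le_mul_of_nonneg_right key1 hLu0.le, mul_le_mul_of_nonneg_right hNWB hs0]
  -- the scaling identity
  have h3 : (wmin * μmin ^ 2 / (wmax * μmax ^ 2)) * ((wmax * s / μmin ^ 2) / (lw u + s / μmin))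
      = (wmin * s / μmax ^ 2) / (lw u + s / μmin) := by
    field_simp [hμmin0.ne', hμmax_pos.ne', hwmax_pos.ne', hD0.ne']
  -- α₀ ≤ β
  have hβ0 : 0 ≤ wmin * μmin ^ 2 / (wmax * μmax ^ 2) := by positivity
  have hρden : 0 < lwmin + μmin⁻¹ := by positivity
  have hρ1 : (lwmin + μmax⁻¹) / (lwmin + μmin⁻¹) ≤ 1 := by
    rw [div_le_one hρden]
    have := inv_anti₀ hμmin0 hμminmax
    linarith
  have hρ0 : 0 ≤ (lwmin + μmax⁻¹) / (lwmin + μmin⁻¹) :=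
    div_nonneg (by positivity) hρden.le
  have hβeq : μmin ^ 2 / (kappa * μmax ^ 2) = wmin * μmin ^ 2 / (wmax * μmax ^ 2) := by
    rw [hkappa]
    field_simp [hwmin_pos.ne', hwmax_pos.ne', hμmax_pos.ne']
  have hαβ : α₀ ≤ wmin * μmin ^ 2 / (wmax * μmax ^ 2) := by
    rw [hα₀, hβeq]
    calc ((lwmin + μmax⁻¹) / (lwmin + μmin⁻¹)) * (wmin * μmin ^ 2 / (wmax * μmax ^ 2))
        ≤ 1 * (wmin * μmin ^ 2 / (wmax * μmax ^ 2)) :=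
          mul_le_mul_of_nonneg_right hρ1 hβ0
      _ = wmin * μmin ^ 2 / (wmax * μmax ^ 2) := one_mul _
  have hΔB0 : 0 ≤ NB / (lw u + qB) := div_nonneg hNB0 hLqB.le
  have hfinal : α₀ * (NB / (lw u + qB)) ≤ NA / (lw u + qA) := by
    calc α₀ * (NB / (lw u + qB))
        ≤ (wmin * μmin ^ 2 / (wmax * μmax ^ 2)) * (NB / (lw u + qB)) :=
          mul_le_mul_of_nonneg_right hαβ hΔB0
      _ ≤ (wmin * μmin ^ 2 / (wmax * μmax ^ 2)) * ((wmax * s / μmin ^ 2) / (lw u + s / μmin)) :=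
          mul_le_mul_of_nonneg_left h2 hβ0
      _ = (wmin * s / μmax ^ 2) / (lw u + s / μmin) := h3
      _ ≤ NA / (lw u + qA) := h1
  have hx : α₀ * (MSE lam lw v H (insert u B) - MSE lam lw v H B)
      = -(α₀ * (NB / (lw u + qB))) := by
    rw [← hdB]
    ring
  rw [hx]
  linarith [hdA, hfinal]
end Diff
end
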